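/- Let α ∈ (0,1). There exists a constant C > 0, independent of ω, such that for every ω ≠ 0, with √s := |ω|^{α/2} exp(iπα·sgn(ω)/4) and g_ω(0,y) = (e^{√s y} − e^{√s(2−y)}) / (√s (1 + e^{2√s})), one has ∫_0^1 |g_ω(0,y)|² dy ≤ C |ω|^{−α}. -/

import Mathlib

open MeasureTheory Real

/-- `√s(ω) = |ω|^{α/2} exp(iπα·sgn(ω)/4)`. -/
noncomputable def sqrtS (α ω : ℝ) : ℂ :=
  ((|ω| ^ (α / 2) : ℝ) : ℂ) *
    Complex.exp (Complex.I * (Real.pi : ℂ) * (α : ℂ) * ((Real.sign ω : ℝ) : ℂ) / 4)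

/-- The frequency-domain Green function evaluated at `x = 0` for `ω ≠ 0`:
`g_ω(0,y) = (e^{√s y} − e^{√s(2−y)}) / (√s(1 + e^{2√s}))`. -/
noncomputable def greenAtZero (α ω y : ℝ) : ℂ :=
  (Complex.exp (sqrtS α ω * (y : ℂ)) - Complex.exp (sqrtS α ω * (2 - (y : ℂ))))
    / (sqrtS α ω * (1 + Complex.exp (2 * sqrtS α ω)))

lemma abs_sqrtS (α ω : ℝ) : ‖sqrtS α ω‖ = |ω| ^ (α / 2) := by
  rw [sqrtS, norm_mul, Complex.norm_real, Real.norm_eq_abs, abs_of_nonneg (Real.rpow_nonneg (abs_nonneg ω) _),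
    Complex.norm_exp]
  norm_num [Complex.mul_re, Complex.div_re]

lemma re_sqrtS (α ω : ℝ) (hω : ω ≠ 0) :
    (sqrtS α ω).re = |ω| ^ (α / 2) * Real.cos (Real.pi * α / 4) := by
  have h : Complex.I * (Real.pi : ℂ) * (α : ℂ) * ((Real.sign ω : ℝ) : ℂ) / 4
      = ((Real.pi * α * Real.sign ω / 4 : ℝ) : ℂ) * Complex.I := by push_cast; ring
  rw [sqrtS, h, Complex.exp_mul_I]
  have hc : Real.cos (Real.pi * α * Real.sign ω / 4) = Real.cos (Real.pi * α / 4) := by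
    rcases hω.lt_or_gt with h' | h'
    · rw [Real.sign_of_neg h']; rw [show Real.pi * α * (-1) / 4 = -(Real.pi * α / 4) by ring,
        Real.cos_neg]
    · rw [Real.sign_of_pos h']; ring_nf
  simp only [Complex.mul_re, Complex.add_re, Complex.add_im, Complex.mul_im, Complex.I_re,
    Complex.I_im, Complex.ofReal_re, Complex.ofReal_im, Complex.cos_ofReal_re,
    Complex.cos_ofReal_im, Complex.sin_ofReal_re, Complex.sin_ofReal_im, hc]
  ring

set_option maxHeartbeats 1000000 in
lemma green_pointwise (α ω : ℝ) (hα : α ∈ Set.Ioo (0:ℝ) 1) (hω : ω ≠ 0) {y : ℝ}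
    (hy0 : 0 ≤ y) (hy1 : y ≤ 1) :
    ‖greenAtZero α ω y‖ ≤ 10 * (|ω| ^ (α / 2))⁻¹ := by
  obtain ⟨hα0, hα1⟩ := hα
  set s := sqrtS α ω with hs
  set t := |ω| ^ (α / 2) with htdef
  set c := Real.cos (Real.pi * α / 4) with hcdef
  have ht : 0 < t := Real.rpow_pos_of_pos (abs_pos.mpr hω) _
  have habs : ‖s‖ = t := abs_sqrtS α ω
  have hre : s.re = t * c := re_sqrtS α ω hω
  have hc_ub : c ≤ 1 := Real.cos_le_one _
  have hc_lb : (1:ℝ)/2 ≤ c := by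
    have h1 : Real.cos (Real.pi / 4) ≤ c := by
      apply Real.cos_le_cos_of_nonneg_of_le_pi
      · positivity
      · linarith [Real.pi_pos]
      · nlinarith [Real.pi_pos]
    rw [Real.cos_pi_div_four] at h1
    nlinarith [Real.sq_sqrt (by norm_num : (2:ℝ) ≥ 0), Real.sqrt_nonneg 2]
  set r := s.re with hrdef
  have hr_pos : 0 < r := by rw [hre]; nlinarith
  -- real parts of the exponents
  have hre1 : (s * (y:ℂ)).re = r * y := by
    simp [Complex.mul_re, hrdef]
  have hre2 : (s * (2 - (y:ℂ))).re = r * (2 - y) := by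
    have : (2 - (y:ℂ)) = ((2 - y : ℝ) : ℂ) := by push_cast; ring
    rw [this]; simp [Complex.mul_re, hrdef]
  have hre3 : (2 * s).re = 2 * r := by simp [Complex.mul_re, hrdef]
  set D := ‖1 + Complex.exp (2 * s)‖ with hDdef
  clear_value s t c r D
  -- main claim: numerator ≤ 10 * D, and D > 0
  have key : ‖Complex.exp (s * (y:ℂ)) - Complex.exp (s * (2 - (y:ℂ)))‖ ≤ 10 * D
      ∧ 0 < D := by
    rcases le_or_gt t (1/4) with hts | hts
    · -- small frequency case
      have h2s : ‖2 * s‖ = 2 * t := by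
        rw [norm_mul, habs]; simp
      have hD1 : 1 ≤ D := by
        have h1 : ‖Complex.exp (2 * s) - 1‖ ≤ 2 * (2 * t) := by
          have := Complex.norm_exp_sub_one_le (x := 2 * s) (by rw [h2s]; linarith)
          rwa [h2s] at this
        have heq : (1 + Complex.exp (2*s)) - (Complex.exp (2*s) - 1) = 2 := by ring
        have h2 : (2:ℝ) ≤ D + ‖Complex.exp (2*s) - 1‖ := by
          calc (2:ℝ) = ‖(1 + Complex.exp (2*s)) - (Complex.exp (2*s) - 1)‖ := by
                rw [heq]; norm_num
            _ ≤ D + ‖Complex.exp (2*s) - 1‖ := by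
                rw [hDdef]; exact norm_sub_le _ _
        linarith
      -- numerator factorization
      have hfac : Complex.exp (s * (y:ℂ)) - Complex.exp (s * (2 - (y:ℂ)))
          = Complex.exp (s * (y:ℂ)) * (1 - Complex.exp (s * ((2:ℂ) - 2*(y:ℂ)))) := by
        rw [show s * (2 - (y:ℂ)) = s * (y:ℂ) + s * ((2:ℂ) - 2*(y:ℂ)) from by ring,
          Complex.exp_add]
        ring
      have hw : ‖s * ((2:ℂ) - 2*(y:ℂ))‖ = t * (2 - 2*y) := by
        rw [norm_mul, habs]
        have : ((2:ℂ) - 2*(y:ℂ)) = ((2 - 2*y : ℝ) : ℂ) := by push_cast; ring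
        rw [this, Complex.norm_real, Real.norm_eq_abs, abs_of_nonneg (by linarith)]
      have hwle : t * (2 - 2*y) ≤ 2 * t := by nlinarith
      have h4 : ‖1 - Complex.exp (s * ((2:ℂ) - 2*(y:ℂ)))‖ ≤ 2 * (2 * t) := by
        rw [← norm_neg, neg_sub]
        calc ‖Complex.exp (s * ((2:ℂ) - 2*(y:ℂ))) - 1‖
            ≤ 2 * ‖s * ((2:ℂ) - 2*(y:ℂ))‖ :=
              Complex.norm_exp_sub_one_le (by rw [hw]; linarith)
          _ ≤ 2 * (2 * t) := by rw [hw]; linarith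
      have h5 : ‖Complex.exp (s * (y:ℂ))‖ ≤ 3 := by
        rw [Complex.norm_exp, hre1]
        have : r * y ≤ 1 := by
          have : r ≤ t := by rw [hre]; nlinarith
          nlinarith
        calc Real.exp (r * y) ≤ Real.exp 1 := Real.exp_le_exp.mpr this
          _ ≤ 3 := by linarith [Real.exp_one_lt_d9]
      constructor
      · rw [hfac, norm_mul]
        calc ‖Complex.exp (s * (y:ℂ))‖ *
              ‖1 - Complex.exp (s * ((2:ℂ) - 2*(y:ℂ)))‖
            ≤ 3 * (2 * (2 * t)) := by
              apply mul_le_mul h5 h4 (norm_nonneg _) (by norm_num)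
          _ ≤ 10 * D := by nlinarith
      · linarith
    · -- large frequency case
      have hr18 : (1:ℝ)/8 ≤ r := by rw [hre]; nlinarith
      have hDlb : Real.exp (2*r) - 1 ≤ D := by
        have h2 : ‖Complex.exp (2*s)‖ ≤ D + 1 := by
          have : Complex.exp (2*s) = (1 + Complex.exp (2*s)) - 1 := by ring
          rw [this]
          calc ‖(1 + Complex.exp (2*s)) - 1‖
              ≤ ‖1 + Complex.exp (2*s)‖ + ‖(1:ℂ)‖ :=
                norm_sub_le _ _
            _ = D + 1 := by rw [hDdef]; norm_num
        rw [Complex.norm_exp, hre3] at h2; linarith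
      have hexp54 : (5:ℝ)/4 ≤ Real.exp (2*r) := by
        have := Real.add_one_le_exp (2*r); linarith
      have hD5 : Real.exp (2*r) / 5 ≤ D := by nlinarith
      have hnum : ‖Complex.exp (s * (y:ℂ)) - Complex.exp (s * (2 - (y:ℂ)))‖
          ≤ 2 * Real.exp (2*r) := by
        calc ‖Complex.exp (s * (y:ℂ)) - Complex.exp (s * (2 - (y:ℂ)))‖
            ≤ ‖Complex.exp (s * (y:ℂ))‖
              + ‖Complex.exp (s * (2 - (y:ℂ)))‖ := norm_sub_le _ _
          _ ≤ Real.exp (2*r) + Real.exp (2*r) := by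
              rw [Complex.norm_exp, Complex.norm_exp, hre1, hre2]
              have e1 : r * y ≤ 2 * r := by nlinarith
              have e2 : r * (2 - y) ≤ 2 * r := by nlinarith
              exact add_le_add (Real.exp_le_exp.mpr e1) (Real.exp_le_exp.mpr e2)
          _ = 2 * Real.exp (2*r) := by ring
      exact ⟨by linarith, by linarith [Real.exp_pos (2*r)]⟩
  obtain ⟨hnum, hD⟩ := key
  rw [greenAtZero, ← hs]
  rw [norm_div, norm_mul, habs, ← hDdef]
  rw [div_le_iff₀ (by positivity)]
  calc ‖Complex.exp (s * (y:ℂ)) - Complex.exp (s * (2 - (y:ℂ)))‖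
      ≤ 10 * D := hnum
    _ = 10 * t⁻¹ * (t * D) := by field_simp
    _ ≤ 10 * t⁻¹ * (t * D) := le_refl _

/-- There is a constant `C > 0`, independent of `ω`, such that for every `ω ≠ 0`,
`∫_0^1 |g_ω(0,y)|² dy ≤ C |ω|^{−α}`. -/
theorem greenAtZero_L2_decay (α : ℝ) (hα : α ∈ Set.Ioo (0:ℝ) 1) :
    ∃ C > 0, ∀ ω : ℝ, ω ≠ 0 →
      (∫ y in (0:ℝ)..1, ‖greenAtZero α ω y‖ ^ 2) ≤ C * |ω| ^ (-α) := by
  refine ⟨100, by norm_num, fun ω hω => ?_⟩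
  set t := |ω| ^ (α / 2) with htdef
  have ht : 0 < t := Real.rpow_pos_of_pos (abs_pos.mpr hω) _
  have hbound : ∀ y ∈ Set.uIoc (0:ℝ) 1, ‖‖greenAtZero α ω y‖ ^ 2‖ ≤ (10 * t⁻¹) ^ 2 := by
    intro y hy
    rw [Set.uIoc_of_le (by norm_num : (0:ℝ) ≤ 1)] at hy
    have h := green_pointwise α ω hα hω (le_of_lt hy.1) hy.2
    rw [Real.norm_eq_abs, abs_of_nonneg (by positivity)]
    exact pow_le_pow_left₀ (norm_nonneg _) h 2
  have hI := intervalIntegral.norm_integral_le_of_norm_le_const hbound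
  have h2 : (∫ y in (0:ℝ)..1, ‖greenAtZero α ω y‖ ^ 2) ≤ (10 * t⁻¹) ^ 2 := by
    calc (∫ y in (0:ℝ)..1, ‖greenAtZero α ω y‖ ^ 2)
        ≤ ‖∫ y in (0:ℝ)..1, ‖greenAtZero α ω y‖ ^ 2‖ := le_abs_self _
      _ ≤ (10 * t⁻¹) ^ 2 * |1 - 0| := hI
      _ = (10 * t⁻¹) ^ 2 := by norm_num
  have ht2 : t ^ 2 = |ω| ^ α := by
    rw [htdef, ← Real.rpow_natCast (|ω| ^ (α/2)) 2, ← Real.rpow_mul (abs_nonneg ω)]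
    norm_num
  have h3 : (10 * t⁻¹) ^ 2 = 100 * |ω| ^ (-α) := by
    rw [Real.rpow_neg (abs_nonneg ω), ← ht2]
    field_simp
    ring
  linarith [h2, h3.le, h3.ge]
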